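/- Let X be a Fréchet space with seminorms (p_j) such that ker p_{j+1} has finite codimension in ker p_j for every j ≥ 1, and suppose ker p_1 ≠ {0} is infinite-dimensional. For each j choose a finite-dimensional complement M_j of ker p_{j+1} in ker p_j with basis (e^j_n)_{1≤n≤n_j}. Then the concatenated family {(e^j_n)}_{j≥1} is a Schauder basis of ker p_1: every x ∈ ker p_1 has a unique convergent representation x = Σ_{j=1}^∞ Σ_{n=1}^{n_j} α^j_n e^j_n. -/

import Mathlib

open Filter Finset

/-- The kernel `{x | p x = 0}` of a seminorm, as a submodule. -/
def Seminorm.kerSubmodule {X : Type*} [AddCommGroup X] [Module ℝ X]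
    (p : Seminorm ℝ X) : Submodule ℝ X where
  carrier := {x | p x = 0}
  zero_mem' := map_zero p
  add_mem' := by
    intro a b ha hb
    simp only [Set.mem_setOf_eq] at ha hb ⊢
    refine le_antisymm ?_ (apply_nonneg p _)
    calc p (a + b) ≤ p a + p b := map_add_le_add p a b
      _ = 0 := by rw [ha, hb, add_zero]
  smul_mem' := by
    intro c x hx
    simp only [Set.mem_setOf_eq] at hx ⊢
    rw [map_smul_eq_mul, hx, mul_zero]

/-- If `ker p_{j+1}` has finite codimension in `ker p_j` for every
`j` and `ker p_1` is infinite-dimensional, then the concatenation of bases of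
finite-dimensional complements `M_j` of `ker p_{j+1}` in `ker p_j` is a Schauder
basis of `ker p_1`: every `x ∈ ker p_1` has a unique convergent expansion
`x = ∑_j ∑_n α^j_n e^j_n`.  (Here the index `j : ℕ` starting at `0` plays the
role of `j ≥ 1` in the paper, so `ker p_1` is `(p 0).kerSubmodule`.) -/
theorem stmt_8 {X : Type*} [AddCommGroup X] [Module ℝ X] [UniformSpace X]
    [IsUniformAddGroup X] [CompleteSpace X] [ContinuousSMul ℝ X]
    (p : SeminormFamily ℝ X ℕ) (hp : WithSeminorms p)
    (hmono : Monotone p) (hsep : ∀ x : X, x ≠ 0 → ∃ j, p j x ≠ 0)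
    (hfincodim : ∀ j : ℕ, FiniteDimensional ℝ
      (↥((p j).kerSubmodule) ⧸
        ((p (j + 1)).kerSubmodule.comap ((p j).kerSubmodule).subtype)))
    (hinf : ¬ FiniteDimensional ℝ ↥((p 0).kerSubmodule))
    (M : ℕ → Submodule ℝ X)
    (hMle : ∀ j, M j ≤ (p j).kerSubmodule)
    (hMdisj : ∀ j, M j ⊓ (p (j + 1)).kerSubmodule = ⊥)
    (hMsum : ∀ j, M j ⊔ (p (j + 1)).kerSubmodule = (p j).kerSubmodule)
    (hMfin : ∀ j, FiniteDimensional ℝ ↥(M j))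
    (d : ℕ → ℕ) (e : (j : ℕ) → Fin (d j) → X)
    (he_indep : ∀ j, LinearIndependent ℝ (e j))
    (he_span : ∀ j, Submodule.span ℝ (Set.range (e j)) = M j) :
    ∀ x ∈ (p 0).kerSubmodule, ∃! α : (j : ℕ) → Fin (d j) → ℝ,
      Tendsto (fun J => ∑ j ∈ range J, ∑ n : Fin (d j), α j n • e j n)
        atTop (nhds x) := by
  classical
  intro x hx
  -- kernel monotonicity
  have hker : ∀ {i j : ℕ}, i ≤ j → (p j).kerSubmodule ≤ (p i).kerSubmodule := by
    intro i j hij y hy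
    have h1 : p i y ≤ p j y := hmono hij y
    have h2 : p j y = 0 := hy
    exact le_antisymm (h2 ▸ h1) (apply_nonneg _ _)
  -- adding a kernel element doesn't change the seminorm value
  have hadd : ∀ (j : ℕ) (a b : X), b ∈ (p j).kerSubmodule → p j (a + b) = p j a := by
    intro j a b hb
    have hb0 : p j b = 0 := hb
    refine le_antisymm ?_ ?_
    · calc p j (a + b) ≤ p j a + p j b := map_add_le_add _ _ _
        _ = p j a := by rw [hb0, add_zero]
    · calc p j a = p j (a + b + -b) := by rw [add_neg_cancel_right]
        _ ≤ p j (a + b) + p j (-b) := map_add_le_add _ _ _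
        _ = p j (a + b) := by rw [map_neg_eq_map, hb0, add_zero]
  -- membership of basis combinations in M j
  have htmem : ∀ (j : ℕ) (c : Fin (d j) → ℝ), (∑ n : Fin (d j), c n • e j n) ∈ M j := by
    intro j c
    rw [← he_span j]
    exact Submodule.sum_mem _ fun n _ =>
      Submodule.smul_mem _ _ (Submodule.subset_span ⟨n, rfl⟩)
  -- decomposition
  have hdec : ∀ (j : ℕ) (y : X), y ∈ (p j).kerSubmodule →
      ∃ m, m ∈ M j ∧ y - m ∈ (p (j + 1)).kerSubmodule := by
    intro j y hy
    rw [← hMsum j] at hy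
    obtain ⟨m, hm, r, hr, hmr⟩ := Submodule.mem_sup.mp hy
    refine ⟨m, hm, ?_⟩
    have : y - m = r := by rw [← hmr]; abel
    rw [this]; exact hr
  let comp : ℕ → X → X := fun j y =>
    if h : y ∈ (p j).kerSubmodule then (hdec j y h).choose else 0
  let rem : ℕ → X := fun J => Nat.rec x (fun j y => y - comp j y) J
  have hrem0 : rem 0 = x := rfl
  have hremS : ∀ j, rem (j + 1) = rem j - comp j (rem j) := fun j => rfl
  have hrem_ker : ∀ j, rem j ∈ (p j).kerSubmodule := by
    intro j
    induction j with
    | zero => exact hx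
    | succ j ih =>
      rw [hremS j]
      have : comp j (rem j) = (hdec j (rem j) ih).choose := by
        simp only [comp, dif_pos ih]
      rw [this]
      exact (hdec j (rem j) ih).choose_spec.2
  have hcomp_mem : ∀ j, comp j (rem j) ∈ M j := by
    intro j
    have : comp j (rem j) = (hdec j (rem j) (hrem_ker j)).choose := by
      simp only [comp, dif_pos (hrem_ker j)]
    rw [this]
    exact (hdec j (rem j) (hrem_ker j)).choose_spec.1
  -- coefficients
  have hα : ∀ j, ∃ c : Fin (d j) → ℝ, ∑ n, c n • e j n = comp j (rem j) := by
    intro j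
    refine (Submodule.mem_span_range_iff_exists_fun (R := ℝ)).1 ?_
    rw [he_span j]
    exact hcomp_mem j
  set α : (j : ℕ) → Fin (d j) → ℝ := fun j => (hα j).choose with hαdef
  have hαspec : ∀ j, ∑ n, α j n • e j n = comp j (rem j) := fun j => (hα j).choose_spec
  -- partial sums
  have hpsum : ∀ J, ∑ j ∈ range J, ∑ n : Fin (d j), α j n • e j n = x - rem J := by
    intro J
    induction J with
    | zero => simp [hrem0]
    | succ J ih =>
      rw [Finset.sum_range_succ, ih, hαspec J, hremS J]
      abel
  -- key uniqueness lemma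
  have key : ∀ (γ : (j : ℕ) → Fin (d j) → ℝ),
      Tendsto (fun J => ∑ j ∈ range J, ∑ n : Fin (d j), γ j n • e j n) atTop (nhds 0) →
      ∀ j n, γ j n = 0 := by
    intro γ hγ j
    induction j using Nat.strong_induction_on with
    | _ j ih =>
      have ht0 : ∀ i < j, ∑ n : Fin (d i), γ i n • e i n = 0 := by
        intro i hi
        have : ∀ n : Fin (d i), γ i n = 0 := ih i hi
        simp [this]
      have hconst : ∀ J, j < J →
          p (j + 1) (∑ i ∈ range J, ∑ n : Fin (d i), γ i n • e i n)
            = p (j + 1) (∑ n : Fin (d j), γ j n • e j n) := by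
        intro J hJ
        have hsplit : ∑ i ∈ range J, ∑ n : Fin (d i), γ i n • e i n
            = (∑ n : Fin (d j), γ j n • e j n)
              + ∑ i ∈ Finset.Ico (j + 1) J, ∑ n : Fin (d i), γ i n • e i n := by
          rw [← Finset.sum_range_add_sum_Ico _ (Nat.succ_le_of_lt hJ),
            Finset.sum_range_succ]
          have : ∑ i ∈ range j, ∑ n : Fin (d i), γ i n • e i n = 0 :=
            Finset.sum_eq_zero fun i hi => ht0 i (Finset.mem_range.mp hi)
          rw [this, zero_add]
        rw [hsplit]
        refine hadd (j + 1) _ _ ?_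
        refine Submodule.sum_mem _ fun i hi => ?_
        have hij : j + 1 ≤ i := (Finset.mem_Ico.mp hi).1
        exact hker hij (hMle i (htmem i (γ i)))
      have hcont : Tendsto
          (fun J => p (j + 1) (∑ i ∈ range J, ∑ n : Fin (d i), γ i n • e i n))
          atTop (nhds (p (j + 1) (0 : X))) :=
        ((hp.continuous_seminorm (j + 1)).continuousAt.tendsto).comp hγ
      rw [map_zero] at hcont
      have hconst' : Tendsto
          (fun J => p (j + 1) (∑ i ∈ range J, ∑ n : Fin (d i), γ i n • e i n))
          atTop (nhds (p (j + 1) (∑ n : Fin (d j), γ j n • e j n))) := by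
        refine Tendsto.congr' ?_ tendsto_const_nhds
        filter_upwards [Filter.eventually_gt_atTop j] with J hJ
        exact (hconst J hJ).symm
      have hzero : p (j + 1) (∑ n : Fin (d j), γ j n • e j n) = 0 :=
        tendsto_nhds_unique hconst' hcont
      have hmem : (∑ n : Fin (d j), γ j n • e j n) ∈ M j ⊓ (p (j + 1)).kerSubmodule :=
        ⟨htmem j (γ j), hzero⟩
      rw [hMdisj j, Submodule.mem_bot] at hmem
      exact Fintype.linearIndependent_iff.mp (he_indep j) (γ j) hmem
  refine ⟨α, ?_, ?_⟩
  · -- existence: partial sums tend to x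
    show Tendsto (fun J => ∑ j ∈ range J, ∑ n : Fin (d j), α j n • e j n)
      atTop (nhds x)
    rw [hp.tendsto_nhds]
    intro i ε hε
    rw [Filter.eventually_atTop]
    refine ⟨i, fun J hJ => ?_⟩
    rw [hpsum J]
    have : x - rem J - x = -rem J := by abel
    rw [this, map_neg_eq_map]
    have h1 : p i (rem J) ≤ p J (rem J) := hmono hJ (rem J)
    have h2 : p J (rem J) = 0 := hrem_ker J
    calc p i (rem J) ≤ 0 := h2 ▸ h1
      _ < ε := hε
  · -- uniqueness
    intro β hβ
    have hαt : Tendsto (fun J => ∑ j ∈ range J, ∑ n : Fin (d j), α j n • e j n)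
        atTop (nhds x) := by
      rw [hp.tendsto_nhds]
      intro i ε hε
      rw [Filter.eventually_atTop]
      refine ⟨i, fun J hJ => ?_⟩
      rw [hpsum J]
      have : x - rem J - x = -rem J := by abel
      rw [this, map_neg_eq_map]
      have h1 : p i (rem J) ≤ p J (rem J) := hmono hJ (rem J)
      have h2 : p J (rem J) = 0 := hrem_ker J
      calc p i (rem J) ≤ 0 := h2 ▸ h1
        _ < ε := hε
    have hdiff : Tendsto (fun J => ∑ j ∈ range J,
        ∑ n : Fin (d j), (β j n - α j n) • e j n) atTop (nhds 0) := by
      have := hβ.sub hαt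
      rw [sub_self] at this
      refine this.congr fun J => ?_
      rw [← Finset.sum_sub_distrib]
      refine Finset.sum_congr rfl fun j _ => ?_
      rw [← Finset.sum_sub_distrib]
      refine Finset.sum_congr rfl fun n _ => ?_
      rw [sub_smul]
    have := key _ hdiff
    funext j n
    have h := this j n
    linarith [h]
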